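/- Let F be a finite field, let c ≥ 1, let 0 ≤ k ≤ n' ≤ n be integers, and let γ : Fⁿ → {1,…,c} and δ : F^k → {1,…,c} be colorings. Write Inj(a,b) for the set of injective linear maps F^a → F^b, and say a coloring f of F^k is isomorphic to δ if f = δ∘e for some linear automorphism e of F^k. Then #{ψ ∈ Inj(k,n) : γ∘ψ isomorphic to δ} · |Inj(n',n)| · |Inj(k,n')| = |Inj(k,n)| · #{(φ,ψ') ∈ Inj(n',n) × Inj(k,n') : γ∘φ∘ψ' isomorphic to δ}. -/

import Mathlib

open Function Module

section AuxDensity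

private lemma exists_equiv_comp' {F : Type*} [Field F] {k n : ℕ}
    (ψ₁ ψ₂ : (Fin k → F) →ₗ[F] (Fin n → F)) (h₁ : Injective ψ₁) (h₂ : Injective ψ₂) :
    ∃ g : (Fin n → F) ≃ₗ[F] (Fin n → F), ∀ x, g (ψ₁ x) = ψ₂ x := by
  classical
  set W₁ := LinearMap.range ψ₁ with hW₁
  set W₂ := LinearMap.range ψ₂ with hW₂
  obtain ⟨C₁, hC₁⟩ := W₁.exists_isCompl
  obtain ⟨C₂, hC₂⟩ := W₂.exists_isCompl
  let e₀ : W₁ ≃ₗ[F] W₂ :=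
    (LinearEquiv.ofInjective ψ₁ h₁).symm.trans (LinearEquiv.ofInjective ψ₂ h₂)
  have hr : finrank F C₁ = finrank F C₂ := by
    have h1 := Submodule.finrank_add_eq_of_isCompl hC₁
    have h2 := Submodule.finrank_add_eq_of_isCompl hC₂
    have h3 : finrank F W₁ = finrank F W₂ := e₀.finrank_eq
    omega
  let e₁ : C₁ ≃ₗ[F] C₂ := LinearEquiv.ofFinrankEq _ _ hr
  refine ⟨((Submodule.prodEquivOfIsCompl W₁ C₁ hC₁).symm.trans
      ((e₀.prodCongr e₁).trans (Submodule.prodEquivOfIsCompl W₂ C₂ hC₂))), fun x => ?_⟩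
  have hx : ψ₁ x ∈ W₁ := ⟨x, rfl⟩
  have h4 : (Submodule.prodEquivOfIsCompl W₁ C₁ hC₁).symm (ψ₁ x) = ((⟨ψ₁ x, hx⟩ : ↥W₁), (0 : ↥C₁)) := by
    apply (Submodule.prodEquivOfIsCompl W₁ C₁ hC₁).symm_apply_eq.2
    simp [Submodule.coe_prodEquivOfIsCompl']
  have h5 : e₀ ⟨ψ₁ x, hx⟩ = ⟨ψ₂ x, ⟨x, rfl⟩⟩ := by
    have : (⟨ψ₁ x, hx⟩ : ↥W₁) = LinearEquiv.ofInjective ψ₁ h₁ x := rfl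
    simp [e₀, this]
    rfl
  rw [LinearEquiv.trans_apply, LinearEquiv.trans_apply, h4, LinearEquiv.prodCongr_apply, h5,
    e₁.map_zero, Submodule.coe_prodEquivOfIsCompl']
  simp

private lemma card_comp_mul' {α β : Type*} [Finite α] [Finite β] (f : α → β)
    (hf : ∀ b₁ b₂ : β, Nat.card {a // f a = b₁} = Nat.card {a // f a = b₂})
    (P : β → Prop) :
    Nat.card {a // P (f a)} * Nat.card β = Nat.card {b // P b} * Nat.card α := by
  classical
  cases nonempty_fintype α; cases nonempty_fintype β
  simp only [Nat.card_eq_fintype_card]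
  have key : ∀ Q : β → Prop, ∀ _ : DecidablePred Q,
      Fintype.card {a // Q (f a)} =
        ∑ b ∈ Finset.univ.filter Q, Fintype.card {a // f a = b} := by
    intro Q _
    rw [Fintype.card_subtype,
      Finset.card_eq_sum_card_fiberwise (f := f) (t := Finset.univ.filter Q)
        (fun a ha => by simpa using ha)]
    refine Finset.sum_congr rfl fun b hb => ?_
    rw [Fintype.card_subtype]
    congr 1
    ext a
    simp only [Finset.mem_filter, Finset.mem_univ, true_and] at hb ⊢
    exact ⟨fun h => h.2, fun h => ⟨h ▸ hb, h⟩⟩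
  rcases isEmpty_or_nonempty β with hβ | hne
  · have : IsEmpty α := ⟨fun a => hβ.false (f a)⟩
    simp
  · obtain ⟨b₀⟩ := hne
    set N := Fintype.card {a // f a = b₀} with hN
    have hfib : ∀ b, Fintype.card {a // f a = b} = N := fun b => by
      have := hf b b₀
      simpa [Nat.card_eq_fintype_card] using this
    have h1 : Fintype.card {a // P (f a)} = (Finset.univ.filter P).card * N := by
      rw [key P (Classical.decPred P), Finset.sum_congr rfl fun b _ => hfib b,
        Finset.sum_const, smul_eq_mul]
    have h2 : Fintype.card α = Fintype.card β * N := by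
      have h3 := key (fun _ => True) (fun _ => instDecidableTrue)
      have h4 : Fintype.card {a : α // True} = Fintype.card α :=
        Fintype.card_congr (Equiv.subtypeUnivEquiv fun _ => trivial)
      rw [h4] at h3
      rw [h3, Finset.sum_congr rfl fun b _ => hfib b, Finset.sum_const, smul_eq_mul]
      simp [Finset.card_univ]
    rw [h1, h2, Fintype.card_subtype]
    ring

end AuxDensity


/-- The averaging (double-counting) identity for densities of a coloring `δ` of `F^k`
inside a coloring `γ` of `Fⁿ`: counting injective linear maps `F^k → Fⁿ` inducing a
copy of `δ`, versus first choosing a random `n'`-dimensional subspace and then a copy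
of `δ` inside it. -/
theorem density_averaging_identity (F : Type*) [Field F] [Fintype F]
    (c : ℕ) (hc : 1 ≤ c) (k n' n : ℕ) (hk : k ≤ n') (hn' : n' ≤ n)
    (γ : (Fin n → F) → Fin c) (δ : (Fin k → F) → Fin c) :
    Nat.card {ψ : (Fin k → F) →ₗ[F] (Fin n → F) //
        Function.Injective ⇑ψ ∧
          ∃ e : (Fin k → F) ≃ₗ[F] (Fin k → F), γ ∘ ⇑ψ = δ ∘ ⇑e} *
      Nat.card {φ : (Fin n' → F) →ₗ[F] (Fin n → F) // Function.Injective ⇑φ} *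
      Nat.card {ψ' : (Fin k → F) →ₗ[F] (Fin n' → F) // Function.Injective ⇑ψ'} =
    Nat.card {ψ : (Fin k → F) →ₗ[F] (Fin n → F) // Function.Injective ⇑ψ} *
      Nat.card {p : ((Fin n' → F) →ₗ[F] (Fin n → F)) × ((Fin k → F) →ₗ[F] (Fin n' → F)) //
        Function.Injective ⇑p.1 ∧ Function.Injective ⇑p.2 ∧
          ∃ e : (Fin k → F) ≃ₗ[F] (Fin k → F), γ ∘ ⇑p.1 ∘ ⇑p.2 = δ ∘ ⇑e} := by
  classical
  haveI F1 : Finite ((Fin k → F) →ₗ[F] (Fin n → F)) := Finite.of_injective _ DFunLike.coe_injective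
  haveI F2 : Finite ((Fin n' → F) →ₗ[F] (Fin n → F)) := Finite.of_injective _ DFunLike.coe_injective
  haveI F3 : Finite ((Fin k → F) →ₗ[F] (Fin n' → F)) := Finite.of_injective _ DFunLike.coe_injective
  set α := {p : ((Fin n' → F) →ₗ[F] (Fin n → F)) × ((Fin k → F) →ₗ[F] (Fin n' → F)) //
      Injective ⇑p.1 ∧ Injective ⇑p.2} with hα
  set β := {ψ : (Fin k → F) →ₗ[F] (Fin n → F) // Injective ⇑ψ} with hβ
  have compinj : ∀ p : α, Injective ⇑(p.1.1 ∘ₗ p.1.2) := fun p => by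
    rw [LinearMap.coe_comp]; exact p.2.1.comp p.2.2
  let f : α → β := fun p => ⟨p.1.1 ∘ₗ p.1.2, compinj p⟩
  have hf : ∀ b₁ b₂ : β, Nat.card {a : α // f a = b₁} = Nat.card {a : α // f a = b₂} := by
    have main : ∀ b₁ b₂ : β, ∀ (g : (Fin n → F) ≃ₗ[F] (Fin n → F)),
        (∀ x, g (b₁.1 x) = b₂.1 x) →
        ∀ a : α, f a = b₁ → f ⟨(g.toLinearMap ∘ₗ a.1.1, a.1.2),
          ⟨by rw [LinearMap.coe_comp]; exact g.injective.comp a.2.1, a.2.2⟩⟩ = b₂ := by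
      intro b₁ b₂ g hg a ha
      apply Subtype.ext
      have ha' : a.1.1 ∘ₗ a.1.2 = b₁.1 := congrArg Subtype.val ha
      apply LinearMap.ext
      intro x
      have := LinearMap.congr_fun ha' x
      simp only [f, LinearMap.coe_comp, comp_apply] at this ⊢
      rw [this]; exact hg x
    intro b₁ b₂
    obtain ⟨g, hg⟩ := exists_equiv_comp' b₁.1 b₂.1 b₁.2 b₂.2
    have hg' : ∀ x, g.symm (b₂.1 x) = b₁.1 x := fun x => by
      rw [← hg x, g.symm_apply_apply]
    refine Nat.card_congr ⟨
      fun a => ⟨_, main b₁ b₂ g hg a.1 a.2⟩,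
      fun a => ⟨_, main b₂ b₁ g.symm hg' a.1 a.2⟩, ?_, ?_⟩
    · intro a
      apply Subtype.ext; apply Subtype.ext
      apply Prod.ext
      · apply LinearMap.ext; intro x
        simp
      · rfl
    · intro a
      apply Subtype.ext; apply Subtype.ext
      apply Prod.ext
      · apply LinearMap.ext; intro x
        simp
      · rfl
  have key := card_comp_mul' f hf
    (fun b => ∃ e : (Fin k → F) ≃ₗ[F] (Fin k → F), γ ∘ ⇑b.1 = δ ∘ ⇑e)
  -- identify the four cardinalities
  have e1 : Nat.card {ψ : (Fin k → F) →ₗ[F] (Fin n → F) //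
      Injective ⇑ψ ∧ ∃ e : (Fin k → F) ≃ₗ[F] (Fin k → F), γ ∘ ⇑ψ = δ ∘ ⇑e} =
      Nat.card {b : β // ∃ e : (Fin k → F) ≃ₗ[F] (Fin k → F), γ ∘ ⇑b.1 = δ ∘ ⇑e} :=
    Nat.card_congr (Equiv.subtypeSubtypeEquivSubtypeInter _ _).symm
  have e2 : Nat.card α =
      Nat.card {φ : (Fin n' → F) →ₗ[F] (Fin n → F) // Injective ⇑φ} *
      Nat.card {ψ' : (Fin k → F) →ₗ[F] (Fin n' → F) // Injective ⇑ψ'} := by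
    rw [← Nat.card_prod]
    exact Nat.card_congr (Equiv.subtypeProdEquivProd
      (p := fun φ : (Fin n' → F) →ₗ[F] (Fin n → F) => Injective ⇑φ)
      (q := fun ψ' : (Fin k → F) →ₗ[F] (Fin n' → F) => Injective ⇑ψ'))
  have hiff : ∀ p : ((Fin n' → F) →ₗ[F] (Fin n → F)) × ((Fin k → F) →ₗ[F] (Fin n' → F)),
      (∃ e : (Fin k → F) ≃ₗ[F] (Fin k → F), γ ∘ ⇑(p.1 ∘ₗ p.2) = δ ∘ ⇑e) ↔
      (∃ e : (Fin k → F) ≃ₗ[F] (Fin k → F), γ ∘ ⇑p.1 ∘ ⇑p.2 = δ ∘ ⇑e) := fun p => by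
    rw [LinearMap.coe_comp]
  have e3 : Nat.card {p : ((Fin n' → F) →ₗ[F] (Fin n → F)) × ((Fin k → F) →ₗ[F] (Fin n' → F)) //
        Injective ⇑p.1 ∧ Injective ⇑p.2 ∧
          ∃ e : (Fin k → F) ≃ₗ[F] (Fin k → F), γ ∘ ⇑p.1 ∘ ⇑p.2 = δ ∘ ⇑e} =
      Nat.card {a : α // ∃ e : (Fin k → F) ≃ₗ[F] (Fin k → F), γ ∘ ⇑((f a).1) = δ ∘ ⇑e} := by
    refine Nat.card_congr ⟨
      fun x => ⟨⟨x.1, x.2.1, x.2.2.1⟩, (hiff x.1).2 x.2.2.2⟩,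
      fun a => ⟨a.1.1, a.1.2.1, a.1.2.2, (hiff a.1.1).1 a.2⟩, fun x => rfl, fun a => rfl⟩
  rw [e1, e3, mul_assoc, ← e2, ← key, mul_comm]
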